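/- Let α, μ > 0, let ω, ρ, τ > 0 be impairment parameters, and let 0 < γ_th < ω/ρ. For γ̄ > 0, let P_out(γ̄) denote the probability that Y = ω·X/(ρ·X + τ) falls below γ_th, where X has the α-μ SNR density f_{γ̄}. Then P_out(γ̄) · γ̄^{αμ/2} tends to (μ^{μ−1}/Γ(μ)) · (τ·γ_th/(ω − ρ·γ_th))^{αμ/2} as γ̄ → ∞. -/

import Mathlib

open Real MeasureTheory Filter Topology

/-- The α-μ SNR probability density function. -/
noncomputable def alphaMuDensity (α μ γbar γ : ℝ) : ℝ :=
  if γ ≤ 0 then 0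
  else (α * μ ^ μ) / (2 * Real.Gamma μ * γbar ^ (α * μ / 2)) * γ ^ (α * μ / 2 - 1) *
    Real.exp (-μ * (γ / γbar) ^ (α / 2))

theorem stmt_13 (α μ : ℝ) (hα : 0 < α) (hμ : 0 < μ)
    (ω ρ τ : ℝ) (hω : 0 < ω) (hρ : 0 < ρ) (hτ : 0 < τ)
    (γth : ℝ) (hγth0 : 0 < γth) (hγth : γth < ω / ρ)
    (Pout : ℝ → ℝ)
    (hPout : ∀ γbar : ℝ, 0 < γbar →
      Pout γbar = ∫ γ in {x : ℝ | ω * x / (ρ * x + τ) ≤ γth}, alphaMuDensity α μ γbar γ) :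
    Tendsto (fun γbar : ℝ => Pout γbar * γbar ^ (α * μ / 2)) atTop
      (𝓝 ((μ ^ (μ - 1) / Real.Gamma μ) * (τ * γth / (ω - ρ * γth)) ^ (α * μ / 2))) := by
  have hΓ : 0 < Real.Gamma μ := Real.Gamma_pos_of_pos hμ
  have hp : 0 < α * μ / 2 := by positivity
  have hden : 0 < ω - ρ * γth := by
    have := (lt_div_iff₀ hρ).mp hγth
    nlinarith
  set xs : ℝ := τ * γth / (ω - ρ * γth) with hxs_def
  have hxs : 0 < xs := by positivity
  set C : ℝ := α * μ ^ μ / (2 * Real.Gamma μ) with hC_def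
  have hμμ : (0:ℝ) < μ ^ μ := Real.rpow_pos_of_pos hμ μ
  have hC : 0 < C := by positivity
  have hSmeas : MeasurableSet {x : ℝ | ω * x / (ρ * x + τ) ≤ γth} := by
    apply measurableSet_le _ measurable_const
    fun_prop
  -- Step A: rewrite the outage probability
  have keyA : ∀ γbar : ℝ, 0 < γbar →
      Pout γbar * γbar ^ (α * μ / 2)
        = ∫ γ in Set.Ioc (0:ℝ) xs,
            C * γ ^ (α * μ / 2 - 1) * Real.exp (-μ * (γ / γbar) ^ (α / 2)) := by
    intro γbar hγbar
    have hind : Set.indicator {x : ℝ | ω * x / (ρ * x + τ) ≤ γth} (alphaMuDensity α μ γbar)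
        = Set.indicator (Set.Ioc (0:ℝ) xs) (alphaMuDensity α μ γbar) := by
      funext x
      by_cases hx : x ≤ 0
      · simp [Set.indicator_apply, alphaMuDensity, hx]
      · push_neg at hx
        have hpos : 0 < ρ * x + τ := by positivity
        have hiff : (x ∈ {x : ℝ | ω * x / (ρ * x + τ) ≤ γth}) ↔ x ∈ Set.Ioc (0:ℝ) xs := by
          simp only [Set.mem_setOf_eq, Set.mem_Ioc]
          rw [div_le_iff₀ hpos, hxs_def, le_div_iff₀ hden]
          constructor
          · intro h; exact ⟨hx, by nlinarith⟩
          · rintro ⟨-, h⟩; nlinarith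
        simp only [Set.indicator_apply]
        by_cases hmem : x ∈ Set.Ioc (0:ℝ) xs
        · rw [if_pos (hiff.mpr hmem), if_pos hmem]
        · rw [if_neg (fun h => hmem (hiff.mp h)), if_neg hmem]
    rw [hPout γbar hγbar, ← integral_indicator hSmeas, hind,
      integral_indicator measurableSet_Ioc, ← integral_mul_const]
    apply setIntegral_congr_fun measurableSet_Ioc
    intro γ hγ
    have hγ0 : 0 < γ := hγ.1
    have hbp : (0:ℝ) < γbar ^ (α * μ / 2) := Real.rpow_pos_of_pos hγbar _
    simp only [alphaMuDensity, if_neg (not_le.mpr hγ0), hC_def]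
    field_simp
  -- the limiting integral
  have hlimint : ∫ γ in Set.Ioc (0:ℝ) xs, C * γ ^ (α * μ / 2 - 1)
      = (μ ^ (μ - 1) / Real.Gamma μ) * xs ^ (α * μ / 2) := by
    rw [← intervalIntegral.integral_of_le hxs.le, intervalIntegral.integral_const_mul,
      integral_rpow (Or.inl (by linarith : (-1:ℝ) < α * μ / 2 - 1))]
    rw [sub_add_cancel, Real.zero_rpow hp.ne', sub_zero]
    rw [Real.rpow_sub_one hμ.ne', hC_def]
    field_simp
  -- integrability of the bound
  have hbound_int : IntegrableOn (fun γ : ℝ => C * γ ^ (α * μ / 2 - 1)) (Set.Ioc 0 xs) := by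
    have h := intervalIntegral.intervalIntegrable_rpow'
      (a := 0) (b := xs) (r := α * μ / 2 - 1) (by linarith)
    rw [intervalIntegrable_iff_integrableOn_Ioc_of_le hxs.le] at h
    exact h.const_mul C
  -- dominated convergence
  have main : Tendsto (fun γbar : ℝ => ∫ γ in Set.Ioc (0:ℝ) xs,
      C * γ ^ (α * μ / 2 - 1) * Real.exp (-μ * (γ / γbar) ^ (α / 2))) atTop
      (𝓝 (∫ γ in Set.Ioc (0:ℝ) xs, C * γ ^ (α * μ / 2 - 1))) := by
    apply tendsto_integral_filter_of_dominated_convergence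
      (fun γ : ℝ => C * γ ^ (α * μ / 2 - 1))
    · filter_upwards with γbar
      apply Measurable.aestronglyMeasurable
      fun_prop
    · filter_upwards [eventually_gt_atTop (0:ℝ)] with γbar hγbar
      rw [ae_restrict_iff' measurableSet_Ioc]
      filter_upwards with γ hγ
      have hγ0 : 0 < γ := hγ.1
      have hexp : Real.exp (-μ * (γ / γbar) ^ (α / 2)) ≤ 1 := by
        apply Real.exp_le_one_iff.mpr
        have ht : (0:ℝ) ≤ (γ / γbar) ^ (α / 2) := Real.rpow_nonneg (by positivity) _
        nlinarith
      rw [Real.norm_eq_abs, abs_of_nonneg (by positivity)]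
      exact mul_le_of_le_one_right (by positivity) hexp
    · exact hbound_int
    · rw [ae_restrict_iff' measurableSet_Ioc]
      filter_upwards with γ hγ
      have hγ0 : 0 < γ := hγ.1
      have h1 : Tendsto (fun γbar : ℝ => (γ / γbar) ^ (α / 2)) atTop (𝓝 0) := by
        have heq : ∀ᶠ γbar : ℝ in atTop,
            γ ^ (α / 2) / γbar ^ (α / 2) = (γ / γbar) ^ (α / 2) := by
          filter_upwards [eventually_gt_atTop (0:ℝ)] with γbar hγbar
          rw [Real.div_rpow hγ0.le hγbar.le]
        have h2 : Tendsto (fun γbar : ℝ => γ ^ (α / 2) / γbar ^ (α / 2)) atTop (𝓝 0) :=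
          Tendsto.div_atTop tendsto_const_nhds (tendsto_rpow_atTop (by positivity))
        exact h2.congr' heq
      have h2 : Tendsto (fun γbar : ℝ => Real.exp (-μ * (γ / γbar) ^ (α / 2))) atTop
          (𝓝 1) := by
        have h0 : Tendsto (fun γbar : ℝ => -μ * (γ / γbar) ^ (α / 2)) atTop (𝓝 0) := by
          simpa using h1.const_mul (-μ)
        have := (Real.continuous_exp.tendsto 0).comp h0
        simpa [Function.comp_def] using this
      simpa using h2.const_mul (C * γ ^ (α * μ / 2 - 1))
  rw [← hlimint] at *
  refine Tendsto.congr' ?_ main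
  filter_upwards [eventually_gt_atTop (0:ℝ)] with γbar hγbar
  exact (keyA γbar hγbar).symm
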